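/- Let A be an n×n irreducible nonnegative real matrix (n ≥ 2) and let x ∈ ℝ^n have all entries positive. Suppose x is not a Perron vector of A. (i) If there exists an index i_1 ∈ {1,…,n} such that (A²x)_{i_1}/(Ax)_{i_1} = max_{1≤i≤n} (A²x)_i/(Ax)_i and every entry of the i_1-th row of A is nonzero, then max_{1≤i≤n} (A²x)_i/(Ax)_i < max_{1≤i≤n} (Ax)_i/x_i. (ii) If there exists an index i_2 ∈ {1,…,n} such that (A²x)_{i_2}/(Ax)_{i_2} = min_{1≤i≤n} (A²x)_i/(Ax)_i and every entry of the i_2-th row of A is nonzero, then min_{1≤i≤n} (Ax)_i/x_i < min_{1≤i≤n} (A²x)_i/(Ax)_i. -/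

import Mathlib

open Matrix

/-- A square matrix is irreducible if no permutation similarity puts it in block
upper triangular form; equivalently, for every nonempty proper subset `S` of indices
there are `i ∈ S` and `j ∉ S` with `A i j ≠ 0`. -/
def IsIrreducibleMatrix {n : ℕ} (A : Matrix (Fin n) (Fin n) ℝ) : Prop :=
  ∀ S : Finset (Fin n), S.Nonempty → S ≠ Finset.univ → ∃ i ∈ S, ∃ j, j ∉ S ∧ A i j ≠ 0

/-- The Perron value (spectral radius) of a real square matrix: the supremum of the
absolute values of its complex eigenvalues (roots of the characteristic polynomial). -/
noncomputable def perronValue {n : ℕ} (A : Matrix (Fin n) (Fin n) ℝ) : ℝ :=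
  sSup {r : ℝ | ∃ μ : ℂ, ((A.map Complex.ofReal).charpoly).IsRoot μ ∧ r = ‖μ‖}

/-- A Perron vector of `A`: an eigenvector associated with the Perron value of `A`. -/
def IsPerronVector {n : ℕ} (A : Matrix (Fin n) (Fin n) ℝ) (x : Fin n → ℝ) : Prop :=
  x ≠ 0 ∧ A.mulVec x = perronValue A • x

lemma charpoly_isRoot_iff_exists {n : ℕ} (B : Matrix (Fin n) (Fin n) ℂ) (μ : ℂ) :
    B.charpoly.IsRoot μ ↔ ∃ v : Fin n → ℂ, v ≠ 0 ∧ B.mulVec v = μ • v := by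
  have h1 : B.charpoly.eval μ = (μ • (1 : Matrix (Fin n) (Fin n) ℂ) - B).det := by
    rw [Matrix.charpoly, ← Polynomial.coe_evalRingHom, RingHom.map_det]
    congr 1
    ext i j
    by_cases h : i = j <;>
      simp [h, Matrix.charmatrix_apply, Matrix.one_apply, Matrix.diagonal_apply]
  rw [Polynomial.IsRoot, h1, ← Matrix.exists_mulVec_eq_zero_iff]
  constructor
  · rintro ⟨v, hv, h⟩
    refine ⟨v, hv, ?_⟩
    rw [Matrix.sub_mulVec, Matrix.smul_mulVec, Matrix.one_mulVec, sub_eq_zero] at h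
    exact h.symm
  · rintro ⟨v, hv, h⟩
    exact ⟨v, hv, by
      rw [Matrix.sub_mulVec, Matrix.smul_mulVec, Matrix.one_mulVec, h, sub_self]⟩


lemma perronValue_eq_of_eigenvector {n : ℕ} (hn : 0 < n) (A : Matrix (Fin n) (Fin n) ℝ)
    (hnonneg : ∀ i j, 0 ≤ A i j) (x : Fin n → ℝ) (hx : ∀ i, 0 < x i)
    (c : ℝ) (h : A.mulVec x = c • x) : perronValue A = c := by
  have i0 : Fin n := ⟨0, hn⟩
  have hmv : ∀ (v : Fin n → ℝ) i, A.mulVec v i = ∑ j, A i j * v j := by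
    intro v i; simp [Matrix.mulVec, dotProduct]
  have hc0 : 0 ≤ c := by
    have h0 : A.mulVec x i0 = c * x i0 := by rw [h]; simp
    have h1 : 0 ≤ A.mulVec x i0 := by
      rw [hmv]
      exact Finset.sum_nonneg fun j _ => mul_nonneg (hnonneg i0 j) (hx j).le
    nlinarith [hx i0]
  set S := {r : ℝ | ∃ μ : ℂ, ((A.map Complex.ofReal).charpoly).IsRoot μ ∧ r = ‖μ‖}
    with hS
  -- c ∈ S
  have hmem : c ∈ S := by
    refine ⟨(c : ℂ), ?_, by rw [Complex.norm_real, Real.norm_eq_abs, abs_of_nonneg hc0]⟩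
    rw [charpoly_isRoot_iff_exists]
    refine ⟨fun i => (x i : ℂ), ?_, ?_⟩
    · intro h0
      have := congr_fun h0 i0
      simp only [Pi.zero_apply, Complex.ofReal_eq_zero] at this
      exact (hx i0).ne' this
    · funext i
      rw [Pi.smul_apply, smul_eq_mul]
      calc (A.map Complex.ofReal).mulVec (fun i => (x i : ℂ)) i
          = ∑ j, ((A i j : ℝ) : ℂ) * ((x j : ℝ) : ℂ) := by
            simp [Matrix.mulVec, dotProduct, Matrix.map_apply]
        _ = (((∑ j, A i j * x j : ℝ)) : ℂ) := by push_cast; rfl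
        _ = ((A.mulVec x i : ℝ) : ℂ) := by rw [hmv]
        _ = (c : ℂ) * (x i : ℂ) := by rw [h]; push_cast; simp
  -- upper bound
  have hub : ∀ r ∈ S, r ≤ c := by
    rintro r ⟨μ, hroot, rfl⟩
    rw [charpoly_isRoot_iff_exists] at hroot
    obtain ⟨v, hv, hAv⟩ := hroot
    obtain ⟨i, -, hi⟩ := Finset.exists_max_image Finset.univ
      (fun j => ‖v j‖ / x j) ⟨i0, Finset.mem_univ i0⟩
    set t := ‖v i‖ / x i with ht
    have hbound : ∀ j, ‖v j‖ ≤ t * x j := fun j =>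
      (div_le_iff₀ (hx j)).1 (hi j (Finset.mem_univ j))
    have ht0 : 0 < t := by
      obtain ⟨j, hj⟩ := Function.ne_iff.1 hv
      have h1 : 0 < ‖v j‖ := by
        simpa using (norm_pos_iff.mpr hj)
      have := (div_pos h1 (hx j)).trans_le (hi j (Finset.mem_univ j))
      exact this
    have hgi : ‖v i‖ = t * x i := by
      rw [ht, div_mul_cancel₀]; exact (hx i).ne'
    have hkey : ‖μ‖ * (t * x i) ≤ c * (t * x i) := by
      have h1 : μ * v i = ∑ j, (A i j : ℂ) * v j := by
        have := congr_fun hAv i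
        rw [Pi.smul_apply, smul_eq_mul] at this
        rw [← this]
        simp [Matrix.mulVec, dotProduct, Matrix.map_apply]
      have h2 : ‖μ‖ * ‖v i‖ ≤ ∑ j, A i j * ‖v j‖ := by
        rw [← norm_mul, h1]
        refine (norm_sum_le _ _).trans ?_
        refine Finset.sum_le_sum fun j _ => ?_
        rw [norm_mul, Complex.norm_real, Real.norm_eq_abs, abs_of_nonneg (hnonneg i j)]
      have h3 : ∑ j, A i j * ‖v j‖ ≤ ∑ j, A i j * (t * x j) :=
        Finset.sum_le_sum fun j _ => mul_le_mul_of_nonneg_left (hbound j) (hnonneg i j)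
      have h4 : ∑ j, A i j * (t * x j) = c * (t * x i) := by
        have h5 : ∑ j, A i j * (t * x j) = t * ∑ j, A i j * x j := by
          rw [Finset.mul_sum]; exact Finset.sum_congr rfl fun j _ => by ring
        have h6 : A.mulVec x i = c * x i := by rw [h]; simp
        rw [h5, ← hmv, h6]; ring
      calc ‖μ‖ * (t * x i) = ‖μ‖ * ‖v i‖ := by rw [hgi]
        _ ≤ ∑ j, A i j * ‖v j‖ := h2
        _ ≤ ∑ j, A i j * (t * x j) := h3
        _ = c * (t * x i) := h4
    have hpos : 0 < t * x i := mul_pos ht0 (hx i)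
    exact le_of_mul_le_mul_right (by linarith [hkey]) hpos
  exact le_antisymm (csSup_le ⟨c, hmem⟩ hub) (le_csSup ⟨c, hub⟩ hmem)

/-- Let `A` be `n × n` (`n ≥ 2`) irreducible and nonnegative, `x` entrywise
positive and not a Perron vector of `A`.
(i) If some `i₁` attains `max_i (A²x)_i/(Ax)_i` and row `i₁` of `A` has no zero entry, then
`max_i (A²x)_i/(Ax)_i < max_i (Ax)_i/x_i`.
(ii) If some `i₂` attains `min_i (A²x)_i/(Ax)_i` and row `i₂` of `A` has no zero entry, then
`min_i (Ax)_i/x_i < min_i (A²x)_i/(Ax)_i`. -/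
theorem ratio_strict_monotone_of_positive_row {n : ℕ} (hn : 2 ≤ n)
    (A : Matrix (Fin n) (Fin n) ℝ) (x : Fin n → ℝ)
    (hirr : IsIrreducibleMatrix A) (hnonneg : ∀ i j, 0 ≤ A i j) (hx : ∀ i, 0 < x i)
    (hnp : ¬ IsPerronVector A x) :
    ((∃ i₁ : Fin n,
        A.mulVec (A.mulVec x) i₁ / A.mulVec x i₁
            = (⨆ i, A.mulVec (A.mulVec x) i / A.mulVec x i) ∧
        ∀ j, A i₁ j ≠ 0) →
      (⨆ i, A.mulVec (A.mulVec x) i / A.mulVec x i) < ⨆ i, A.mulVec x i / x i) ∧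
    ((∃ i₂ : Fin n,
        A.mulVec (A.mulVec x) i₂ / A.mulVec x i₂
            = (⨅ i, A.mulVec (A.mulVec x) i / A.mulVec x i) ∧
        ∀ j, A i₂ j ≠ 0) →
      (⨅ i, A.mulVec x i / x i) < ⨅ i, A.mulVec (A.mulVec x) i / A.mulVec x i) := by
  have hn0 : 0 < n := by omega
  have i0 : Fin n := ⟨0, hn0⟩
  have hmv : ∀ (v : Fin n → ℝ) i, A.mulVec v i = ∑ j, A i j * v j := by
    intro v i; simp [Matrix.mulVec, dotProduct]
  -- every row has a nonzero entry
  have hrow : ∀ i : Fin n, ∃ j, A i j ≠ 0 := by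
    intro i
    have hne : ({i} : Finset (Fin n)) ≠ Finset.univ := by
      intro hcon
      have := congrArg Finset.card hcon
      simp [Finset.card_univ] at this
      omega
    obtain ⟨i', hi', j, -, hAij⟩ := hirr {i} (Finset.singleton_nonempty i) hne
    rw [Finset.mem_singleton] at hi'
    exact ⟨j, hi' ▸ hAij⟩
  have hpos : ∀ (v : Fin n → ℝ), (∀ i, 0 < v i) → ∀ i, 0 < A.mulVec v i := by
    intro v hv i
    obtain ⟨j, hj⟩ := hrow i
    rw [hmv]
    exact Finset.sum_pos' (fun j _ => mul_nonneg (hnonneg i j) (hv j).le)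
      ⟨j, Finset.mem_univ j, mul_pos ((hnonneg i j).lt_of_ne (Ne.symm hj)) (hv j)⟩
  have hy : ∀ i, 0 < A.mulVec x i := hpos x hx
  -- x is an eigenvector for no scalar
  have hne : ∀ c : ℝ, A.mulVec x ≠ c • x := by
    intro c hc
    refine hnp ⟨fun h0 => (hx i0).ne' (congr_fun h0 i0), ?_⟩
    rw [perronValue_eq_of_eigenvector hn0 A hnonneg x hx c hc]
    exact hc
  constructor
  · rintro ⟨i₁, heq, hrow1⟩
    set M := ⨆ i, A.mulVec x i / x i with hM
    have hub : ∀ j, A.mulVec x j ≤ M * x j := by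
      intro j
      have h1 := le_ciSup (f := fun i => A.mulVec x i / x i) (Finite.bddAbove_range _) j
      rw [← hM] at h1
      exact (div_le_iff₀ (hx j)).1 h1
    have hstrict : ∃ j, A.mulVec x j < M * x j := by
      by_contra hcon
      push_neg at hcon
      refine hne M (funext fun j => ?_)
      rw [Pi.smul_apply, smul_eq_mul]
      exact le_antisymm (hub j) (hcon j)
    obtain ⟨j₀, hj₀⟩ := hstrict
    have key : A.mulVec (A.mulVec x) i₁ < M * A.mulVec x i₁ := by
      rw [hmv (A.mulVec x) i₁]
      calc ∑ j, A i₁ j * A.mulVec x j < ∑ j, A i₁ j * (M * x j) :=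
            Finset.sum_lt_sum
              (fun j _ => mul_le_mul_of_nonneg_left (hub j) (hnonneg i₁ j))
              ⟨j₀, Finset.mem_univ j₀, mul_lt_mul_of_pos_left hj₀
                ((hnonneg i₁ j₀).lt_of_ne (Ne.symm (hrow1 j₀)))⟩
        _ = M * ∑ j, A i₁ j * x j := by
            rw [Finset.mul_sum]; exact Finset.sum_congr rfl fun j _ => by ring
        _ = M * A.mulVec x i₁ := by rw [← hmv]
    rw [← heq]
    exact (div_lt_iff₀ (hy i₁)).2 key
  · rintro ⟨i₂, heq, hrow2⟩
    set m := ⨅ i, A.mulVec x i / x i with hm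
    have hlb : ∀ j, m * x j ≤ A.mulVec x j := by
      intro j
      have h1 := ciInf_le (f := fun i => A.mulVec x i / x i) (Finite.bddBelow_range _) j
      rw [← hm] at h1
      exact (le_div_iff₀ (hx j)).1 h1
    have hstrict : ∃ j, m * x j < A.mulVec x j := by
      by_contra hcon
      push_neg at hcon
      refine hne m (funext fun j => ?_)
      rw [Pi.smul_apply, smul_eq_mul]
      exact le_antisymm (hcon j) (hlb j)
    obtain ⟨j₀, hj₀⟩ := hstrict
    have key : m * A.mulVec x i₂ < A.mulVec (A.mulVec x) i₂ := by
      rw [hmv (A.mulVec x) i₂]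
      calc m * A.mulVec x i₂ = ∑ j, A i₂ j * (m * x j) := by
            rw [hmv, Finset.mul_sum]; exact Finset.sum_congr rfl fun j _ => by ring
        _ < ∑ j, A i₂ j * A.mulVec x j :=
            Finset.sum_lt_sum
              (fun j _ => mul_le_mul_of_nonneg_left (hlb j) (hnonneg i₂ j))
              ⟨j₀, Finset.mem_univ j₀, mul_lt_mul_of_pos_left hj₀
                ((hnonneg i₂ j₀).lt_of_ne (Ne.symm (hrow2 j₀)))⟩
    rw [← heq]
    exact (lt_div_iff₀ (hy i₂)).2 key
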